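/- Let Ψ : ℝ × ℝ → ℝ be analytic in a neighborhood of (0,0) with power series coefficients c_{ij} (the coefficient of r^i R^j). Assume c_{ij} = 0 whenever i + j is even or i + j < 3, and assume c_{21} = c_{12} = 0. If for some τ > 0 the function r ↦ ∂_RΨ(r, r³τ)/r⁶ remains bounded as r → 0⁺, then c_{41} = 0. -/

import Mathlib

open Set

lemma stmt12_aux_j {y : ℝ} (hy : ‖y‖ < 1) :
    Summable (fun j : ℕ => (j : ℝ) * y ^ (j - 1)) := by
  apply (_root_.summable_nat_add_iff 1).mp
  have h2 : Summable (fun n : ℕ => (n : ℝ) ^ 1 * y ^ n) :=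
    summable_pow_mul_geometric_of_norm_lt_one 1 hy
  have h3 : Summable (fun n : ℕ => y ^ n) := summable_geometric_of_norm_lt_one hy
  refine (h2.add h3).congr fun n => ?_
  push_cast
  rw [pow_one]
  ring

lemma stmt12_aux2 {x y : ℝ} (hx : ‖x‖ < 1) (hy : ‖y‖ < 1) :
    Summable (fun ij : ℕ × ℕ => x ^ ij.1 * ((ij.2 : ℝ) * y ^ (ij.2 - 1))) := by
  apply summable_mul_of_summable_norm (f := fun i : ℕ => x ^ i)
    (g := fun j : ℕ => (j : ℝ) * y ^ (j - 1))
  · simpa [norm_pow] using summable_geometric_of_norm_lt_one (by simpa using hx : ‖‖x‖‖ < 1)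
  · have := stmt12_aux_j (y := ‖y‖) (by simpa using hy)
    refine this.congr fun j => ?_
    simp [norm_mul, norm_pow, abs_of_nonneg]

set_option maxHeartbeats 2000000 in
/-- Let `Ψ` be analytic near `(0,0)` with power-series coefficients
`c_{ij}` vanishing whenever `i+j` is even or `i+j < 3`, and with `c₂₁ = c₁₂ = 0`.
If for some `τ > 0` the function `r ↦ ∂_RΨ(r, r³τ)/r⁶` remains bounded as
`r → 0⁺`, then `c₄₁ = 0`. -/
theorem stmt12 (Ψ : ℝ → ℝ → ℝ) (c : ℕ → ℕ → ℝ)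
    (hconv : ∃ ε > (0 : ℝ), ∀ r R : ℝ, |r| < ε → |R| < ε →
      HasSum (fun ij : ℕ × ℕ => c ij.1 ij.2 * r ^ ij.1 * R ^ ij.2) (Ψ r R))
    (hodd : ∀ i j : ℕ, Even (i + j) → c i j = 0)
    (hlow : ∀ i j : ℕ, i + j < 3 → c i j = 0)
    (h21 : c 2 1 = 0) (h12 : c 1 2 = 0)
    (τ : ℝ) (hτ : 0 < τ)
    (hbdd : ∃ M : ℝ, ∀ᶠ r in nhdsWithin (0 : ℝ) (Ioi 0),
      |deriv (fun R => Ψ r R) (r ^ 3 * τ) / r ^ 6| ≤ M) :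
    c 4 1 = 0 := by
  classical
  obtain ⟨ε, hε, hsum⟩ := hconv
  obtain ⟨M, hM⟩ := hbdd
  set ρ : ℝ := min ε 1 / 2 with hρdef
  have hρ0 : 0 < ρ := by
    have := lt_min hε one_pos
    simp only [hρdef]; linarith
  have hρε : ρ < ε := by
    have h1 : min ε 1 ≤ ε := min_le_left _ _
    simp only [hρdef]; linarith
  have hρ1 : ρ ≤ 1 / 2 := by
    have h1 : min ε 1 ≤ 1 := min_le_right _ _
    simp only [hρdef]; linarith
  have hρabs : |ρ| < ε := by rwa [abs_of_pos hρ0]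
  clear_value ρ
  -- absolute summability at (ρ, ρ)
  have hS : Summable (fun ij : ℕ × ℕ => |c ij.1 ij.2| * ρ ^ ij.1 * ρ ^ ij.2) := by
    have h1 := (hsum ρ ρ hρabs hρabs).summable
    have h2 := summable_abs_iff.mpr h1
    refine h2.congr fun ij => ?_
    rw [abs_mul, abs_mul, abs_pow, abs_pow, abs_of_pos hρ0]
  set C : ℝ := ∑' ij : ℕ × ℕ, |c ij.1 ij.2| * ρ ^ ij.1 * ρ ^ ij.2 with hCdef
  have hC0 : 0 ≤ C := tsum_nonneg fun ij => by positivity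
  have hCb : ∀ i j : ℕ, |c i j| * ρ ^ i * ρ ^ j ≤ C :=
    fun i j => Summable.le_tsum hS (i, j) fun ij _ => by positivity
  clear_value C
  -- choice of δ
  set δ : ℝ := min (ρ / 2) (min 1 (ρ / (2 * (τ + 1)))) with hδdef
  have hδ0 : 0 < δ := by
    apply lt_min (by linarith) (lt_min one_pos (by positivity))
  have hδρ : δ ≤ ρ / 2 := min_le_left _ _
  have hδ1 : δ ≤ 1 := le_trans (min_le_right _ _) (min_le_left _ _)
  have hδτ' : δ ≤ ρ / (2 * (τ + 1)) := le_trans (min_le_right _ _) (min_le_right _ _)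
  clear_value δ
  have hδ3τ : δ ^ 3 * τ ≤ ρ / 2 := by
    have h1 : δ ^ 3 ≤ δ := pow_le_of_le_one hδ0.le hδ1 (by norm_num)
    have h2 : δ * (2 * (τ + 1)) ≤ ρ := by
      rw [← le_div_iff₀ (by positivity)]; exact hδτ'
    nlinarith [mul_le_mul_of_nonneg_right h1 hτ.le]
  set a : ℝ := δ / ρ with hadef
  set b : ℝ := δ ^ 3 * τ / ρ with hbdef
  have ha0 : 0 < a := by rw [hadef]; positivity
  have ha1 : a ≤ 1 / 2 := by rw [hadef, div_le_iff₀ hρ0]; linarith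
  have hb0 : 0 < b := by rw [hbdef]; positivity
  have hb1 : b ≤ 1 / 2 := by
    rw [hbdef, div_le_iff₀ hρ0]
    have h : (1:ℝ)/2 * ρ = ρ / 2 := by ring
    rw [h]; exact hδ3τ
  set K : ℝ := C / ρ / δ ^ 6 with hKdef
  have hK0 : 0 ≤ K := by rw [hKdef]; positivity
  set B : ℕ × ℕ → ℝ := fun ij => K * (a ^ ij.1 * ((ij.2 : ℝ) * b ^ (ij.2 - 1))) with hBdef
  have hB0 : ∀ ij : ℕ × ℕ, 0 ≤ B ij := fun ij => by
    rw [hBdef]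
    have : (0:ℝ) ≤ (ij.2 : ℝ) := by positivity
    apply mul_nonneg hK0
    apply mul_nonneg (by positivity)
    exact mul_nonneg this (by positivity)
  have hBsum : Summable B := by
    rw [hBdef]
    apply Summable.mul_left
    exact stmt12_aux2 (by rw [Real.norm_eq_abs, abs_of_pos ha0]; linarith)
      (by rw [Real.norm_eq_abs, abs_of_pos hb0]; linarith)
  set SB : ℝ := ∑' ij : ℕ × ℕ, B ij with hSBdef
  have hSB0 : 0 ≤ SB := tsum_nonneg hB0
  have hBSB : HasSum B SB := by rw [hSBdef]; exact hBsum.hasSum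
  clear_value SB
  -- the exponent lemma
  have hexp : ∀ i j' : ℕ, c i (j' + 1) ≠ 0 → (i, j' + 1) ≠ ((4 : ℕ), (1 : ℕ)) →
      6 ≤ i + 3 * j' := by
    intro i j' hne hne41
    have h1 : ¬Even (i + (j' + 1)) := fun h => hne (hodd _ _ h)
    have h2 : ¬(i + (j' + 1) < 3) := fun h => hne (hlow _ _ h)
    have h3 : ¬(i = 2 ∧ j' + 1 = 1) := fun ⟨hi, hj⟩ => by
      subst hi; rw [hj] at hne; exact hne h21
    have h4 : ¬(i = 1 ∧ j' + 1 = 2) := fun ⟨hi, hj⟩ => by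
      subst hi; rw [hj] at hne; exact hne h12
    have h5 : ¬(i = 4 ∧ j' + 1 = 1) := fun ⟨hi, hj⟩ => hne41 (by simp [hi, hj])
    rw [Nat.even_iff] at h1
    omega
  -- the main eventual bound
  have key : ∀ᶠ r in nhdsWithin (0 : ℝ) (Ioi 0), |c 4 1| ≤ (M + SB) * r ^ 2 := by
    have hmem : Ioo (0 : ℝ) δ ∈ nhdsWithin (0 : ℝ) (Ioi 0) :=
      Ioo_mem_nhdsGT_of_mem ⟨le_refl 0, hδ0⟩
    filter_upwards [hM, hmem] with r hMr hr
    obtain ⟨hr0, hrδ⟩ := hr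
    have hrρ : r < ρ := by linarith
    have hrε : |r| < ε := by rw [abs_of_pos hr0]; linarith
    set R₀ : ℝ := r ^ 3 * τ with hR₀def
    have hR₀0 : 0 < R₀ := by rw [hR₀def]; positivity
    have hR₀lt : R₀ < ρ / 2 := by
      have h1 : r ^ 3 < δ ^ 3 := pow_lt_pow_left₀ hrδ hr0.le (by norm_num)
      have h2 : R₀ < δ ^ 3 * τ := by rw [hR₀def]; nlinarith
      linarith
    have hR₀ε : |R₀| < ε := by rw [abs_of_pos hR₀0]; linarith
    -- the series and its derivative
    set g : ℕ × ℕ → ℝ → ℝ := fun ij R => c ij.1 ij.2 * r ^ ij.1 * R ^ ij.2 with hgdef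
    set g' : ℕ × ℕ → ℝ → ℝ :=
      fun ij R => c ij.1 ij.2 * r ^ ij.1 * ((ij.2 : ℝ) * R ^ (ij.2 - 1)) with hg'def
    set u : ℕ × ℕ → ℝ :=
      fun ij => C / ρ * ((r / ρ) ^ ij.1 * ((ij.2 : ℝ) * (1 / 2 : ℝ) ^ (ij.2 - 1))) with hudef
    have hu : Summable u := by
      rw [hudef]
      apply Summable.mul_left
      exact stmt12_aux2
        (by rw [Real.norm_eq_abs, abs_of_pos (by positivity)]; rw [div_lt_one hρ0]; exact hrρ)
        (by rw [Real.norm_eq_abs, abs_of_pos (by norm_num)]; norm_num)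
    set t : Set ℝ := Ioo (-(ρ / 2)) (ρ / 2) with htdef
    have hgd : ∀ ij : ℕ × ℕ, ∀ R : ℝ, R ∈ t → HasDerivAt (g ij) (g' ij R) R := by
      intro ij R _
      exact (hasDerivAt_pow ij.2 R).const_mul (c ij.1 ij.2 * r ^ ij.1)
    have hgb : ∀ ij : ℕ × ℕ, ∀ R : ℝ, R ∈ t → ‖g' ij R‖ ≤ u ij := by
      intro ij R hR
      obtain ⟨i, j⟩ := ij
      rcases Nat.eq_zero_or_pos j with hj | hj
      · subst hj
        have hz : g' (i, 0) R = 0 := by rw [hg'def]; simp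
        rw [hz, norm_zero, hudef]
        have : (0:ℝ) ≤ ((0:ℕ) : ℝ) := by positivity
        positivity
      · obtain ⟨j', rfl⟩ : ∃ j', j = j' + 1 := ⟨j - 1, by omega⟩
        have hRlt : |R| < ρ / 2 := abs_lt.mpr ⟨hR.1, hR.2⟩
        have hRρ2 : (0:ℝ) < ρ / 2 := by linarith
        have hcle : |c i (j' + 1)| ≤ C / (ρ ^ i * ρ ^ (j' + 1)) := by
          rw [le_div_iff₀ (by positivity)]
          calc |c i (j' + 1)| * (ρ ^ i * ρ ^ (j' + 1))
              = |c i (j' + 1)| * ρ ^ i * ρ ^ (j' + 1) := by ring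
            _ ≤ C := hCb _ _
        have hval : ‖g' (i, j' + 1) R‖
            = |c i (j' + 1)| * r ^ i * (((j' : ℝ) + 1) * |R| ^ j') := by
          rw [hg'def]
          simp only [Real.norm_eq_abs, Nat.add_sub_cancel, abs_mul, abs_pow,
            abs_of_pos hr0, Nat.abs_cast]
          push_cast
          ring
        rw [hval]
        have hstep : |c i (j' + 1)| * r ^ i * (((j' : ℝ) + 1) * |R| ^ j')
            ≤ (C / (ρ ^ i * ρ ^ (j' + 1))) * r ^ i * (((j' : ℝ) + 1) * (ρ / 2) ^ j') := by
          gcongr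
        refine hstep.trans_eq ?_
        rw [hudef]
        simp only [Nat.add_sub_cancel]
        push_cast
        rw [div_pow r ρ i, div_pow (1:ℝ) 2 j', div_pow ρ 2 j', one_pow, pow_succ]
        have h2j : ((2:ℝ)) ^ j' ≠ 0 := by positivity
        field_simp
    have ht_open : IsOpen t := by rw [htdef]; exact isOpen_Ioo
    have ht_conn : IsPreconnected t := by rw [htdef]; exact isPreconnected_Ioo
    have hR₀t : R₀ ∈ t := by rw [htdef]; exact ⟨by linarith, hR₀lt⟩
    have hg0 : Summable fun ij => g ij R₀ := by
      rw [hgdef]; exact (hsum r R₀ hrε hR₀ε).summable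
    have hD : HasDerivAt (fun R => ∑' ij : ℕ × ℕ, g ij R) (∑' ij : ℕ × ℕ, g' ij R₀) R₀ :=
      hasDerivAt_tsum_of_isPreconnected hu ht_open ht_conn hgd hgb hR₀t hg0 hR₀t
    -- identify deriv of Ψ r with the series derivative
    have hEq : (fun R => Ψ r R) =ᶠ[nhds R₀] (fun R => ∑' ij : ℕ × ℕ, g ij R) := by
      have hmem2 : Ioo (-ε) ε ∈ nhds R₀ := isOpen_Ioo.mem_nhds (abs_lt.mp hR₀ε)
      filter_upwards [hmem2] with R hRmem
      rw [hgdef]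
      exact ((hsum r R hrε (abs_lt.mpr ⟨hRmem.1, hRmem.2⟩)).tsum_eq).symm
    have hderiv : deriv (fun R => Ψ r R) R₀ = ∑' ij : ℕ × ℕ, g' ij R₀ := by
      rw [hEq.deriv_eq]; exact hD.deriv
    -- summability of the derivative series
    have hterm_sum : Summable (fun ij : ℕ × ℕ => g' ij R₀) :=
      Summable.of_norm_bounded hu fun ij => hgb ij R₀ hR₀t
    -- split off the (4,1) term
    have hsplit : ∑' ij : ℕ × ℕ, g' ij R₀
        = g' (4, 1) R₀ + ∑' ij : ℕ × ℕ, if ij = ((4 : ℕ), (1 : ℕ)) then 0 else g' ij R₀ :=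
      Summable.tsum_eq_add_tsum_ite hterm_sum (4, 1)
    have h41 : g' (4, 1) R₀ = c 4 1 * r ^ 4 := by
      rw [hg'def]; norm_num
    -- pointwise bound on the remainder terms
    have hptwise : ∀ ij : ℕ × ℕ,
        ‖(if ij = ((4 : ℕ), (1 : ℕ)) then (0:ℝ) else g' ij R₀)‖ ≤ r ^ 6 * B ij := by
      intro ij
      by_cases h41' : ij = ((4 : ℕ), (1 : ℕ))
      · rw [if_pos h41', norm_zero]
        have := hB0 ij
        positivity
      · rw [if_neg h41']
        obtain ⟨i, j⟩ := ij
        rcases Nat.eq_zero_or_pos j with hj | hj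
        · subst hj
          have hz : g' (i, 0) R₀ = 0 := by rw [hg'def]; simp
          rw [hz, norm_zero]
          have := hB0 (i, 0)
          positivity
        obtain ⟨j', rfl⟩ : ∃ j', j = j' + 1 := ⟨j - 1, by omega⟩
        by_cases hc : c i (j' + 1) = 0
        · have hz : g' (i, j' + 1) R₀ = 0 := by rw [hg'def]; simp [hc]
          rw [hz, norm_zero]
          have := hB0 (i, j' + 1)
          positivity
        have h6 : 6 ≤ i + 3 * j' := hexp i j' hc h41'
        set m : ℕ := i + 3 * j' - 6 with hmdef
        have hm : i + 3 * j' = m + 6 := by omega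
        have hval : ‖g' (i, j' + 1) R₀‖
            = |c i (j' + 1)| * r ^ i * (((j' : ℝ) + 1) * R₀ ^ j') := by
          rw [hg'def]
          simp only [Real.norm_eq_abs, Nat.add_sub_cancel, abs_mul, abs_pow,
            abs_of_pos hr0, abs_of_pos hR₀0, Nat.abs_cast]
          push_cast
          ring
        rw [hval]
        have hcle : |c i (j' + 1)| ≤ C / (ρ ^ i * ρ ^ (j' + 1)) := by
          rw [le_div_iff₀ (by positivity)]
          calc |c i (j' + 1)| * (ρ ^ i * ρ ^ (j' + 1))
              = |c i (j' + 1)| * ρ ^ i * ρ ^ (j' + 1) := by ring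
            _ ≤ C := hCb _ _
        have hpow : δ ^ m * δ ^ 6 = δ ^ i * (δ ^ 3) ^ j' := by
          rw [← pow_mul, ← pow_add, ← pow_add]
          congr 1
          omega
        calc |c i (j' + 1)| * r ^ i * (((j' : ℝ) + 1) * R₀ ^ j')
            ≤ (C / (ρ ^ i * ρ ^ (j' + 1))) * r ^ i * (((j' : ℝ) + 1) * R₀ ^ j') := by
              gcongr
          _ = (C * ((j' : ℝ) + 1) * τ ^ j' / (ρ ^ i * ρ ^ (j' + 1))) * r ^ (i + 3 * j') := by
              rw [hR₀def, mul_pow, ← pow_mul, pow_add]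
              ring
          _ = (C * ((j' : ℝ) + 1) * τ ^ j' / (ρ ^ i * ρ ^ (j' + 1))) * (r ^ m * r ^ 6) := by
              rw [hm, pow_add r m 6]
          _ ≤ (C * ((j' : ℝ) + 1) * τ ^ j' / (ρ ^ i * ρ ^ (j' + 1))) * (δ ^ m * r ^ 6) := by
              have hnum : 0 ≤ C * ((j' : ℝ) + 1) * τ ^ j' / (ρ ^ i * ρ ^ (j' + 1)) := by
                positivity
              gcongr
          _ = r ^ 6 * B (i, j' + 1) := by
              rw [hBdef]
              simp only [Nat.add_sub_cancel]
              rw [hKdef, hadef, hbdef]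
              push_cast
              rw [div_pow δ ρ i, div_pow (δ ^ 3 * τ) ρ j', mul_pow (δ ^ 3) τ j', pow_succ]
              field_simp
              linear_combination C * hpow
    -- bound the remainder sum
    set Srem : ℝ := ∑' ij : ℕ × ℕ, if ij = ((4 : ℕ), (1 : ℕ)) then (0:ℝ) else g' ij R₀
      with hSremdef
    have hrem : |Srem| ≤ r ^ 6 * SB := by
      have hhs : HasSum (fun ij : ℕ × ℕ => r ^ 6 * B ij) (r ^ 6 * SB) := hBSB.mul_left _
      rw [hSremdef, ← Real.norm_eq_abs]
      exact tsum_of_norm_bounded hhs hptwise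
    have hDabs : |deriv (fun R => Ψ r R) R₀| ≤ M * r ^ 6 := by
      have h1 : |deriv (fun R => Ψ r R) R₀ / r ^ 6|
          = |deriv (fun R => Ψ r R) R₀| / r ^ 6 := by
        rw [abs_div, abs_of_pos (by positivity : (0:ℝ) < r ^ 6)]
      rw [h1, div_le_iff₀ (by positivity : (0:ℝ) < r ^ 6)] at hMr
      linarith
    have hiden : c 4 1 * r ^ 4 = deriv (fun R => Ψ r R) R₀ - Srem := by
      rw [hderiv, hsplit, h41, hSremdef]; ring
    have habs : |c 4 1| * r ^ 4 ≤ M * r ^ 6 + r ^ 6 * SB := by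
      calc |c 4 1| * r ^ 4 = |c 4 1 * r ^ 4| := by
            rw [abs_mul, abs_of_pos (pow_pos hr0 4)]
        _ = |deriv (fun R => Ψ r R) R₀ - Srem| := by rw [hiden]
        _ ≤ |deriv (fun R => Ψ r R) R₀| + |Srem| := abs_sub _ _
        _ ≤ M * r ^ 6 + r ^ 6 * SB := add_le_add hDabs hrem
    have hfin : |c 4 1| * r ^ 4 ≤ ((M + SB) * r ^ 2) * r ^ 4 := by
      calc |c 4 1| * r ^ 4 ≤ M * r ^ 6 + r ^ 6 * SB := habs
        _ = ((M + SB) * r ^ 2) * r ^ 4 := by ring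
    exact le_of_mul_le_mul_right hfin (by positivity : (0:ℝ) < r ^ 4)
  -- conclusion from the eventual bound
  have htend : Filter.Tendsto (fun r : ℝ => (M + SB) * r ^ 2)
      (nhdsWithin (0 : ℝ) (Ioi 0)) (nhds 0) := by
    have h1 : Filter.Tendsto (fun r : ℝ => (M + SB) * r ^ 2) (nhds 0)
        (nhds ((M + SB) * 0 ^ 2)) :=
      (continuous_const.mul (continuous_pow 2)).tendsto 0
    simpa using h1.mono_left nhdsWithin_le_nhds
  have hle : |c 4 1| ≤ 0 := ge_of_tendsto htend key
  exact abs_eq_zero.mp (le_antisymm hle (abs_nonneg _))
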